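/- Let T ≥ 1 be an integer and 0 < β < T, and set α = (β/T)^{1/T}, so 0 < α < 1. Then ∑_{t=1}^T α^t ≥ αT/ln(T/β) − 2β/ln(T/β). -/

import Mathlib

theorem stmt12 (T : ℕ) (hT : 1 ≤ T) (β : ℝ) (hβ : 0 < β) (hβT : β < T)
    (α : ℝ) (hα : α = (β / T) ^ ((T : ℝ)⁻¹)) :
    α * T / Real.log (T / β) - 2 * β / Real.log (T / β) ≤
      ∑ t ∈ Finset.Icc 1 T, α ^ t := by
  have hT0 : (0:ℝ) < T := by exact_mod_cast Nat.lt_of_lt_of_le Nat.zero_lt_one hT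
  have hTne : (T:ℝ) ≠ 0 := hT0.ne'
  have hbT0 : 0 < β / T := div_pos hβ hT0
  have hbT1 : β / T < 1 := (div_lt_one hT0).2 hβT
  have hα0 : 0 < α := hα ▸ Real.rpow_pos_of_pos hbT0 _
  have hα1 : α < 1 := hα ▸ Real.rpow_lt_one hbT0.le hbT1 (by positivity)
  have hαT : α ^ T = β / T := by
    rw [hα, ← Real.rpow_natCast ((β / T) ^ ((T:ℝ)⁻¹)) T, ← Real.rpow_mul hbT0.le,
      inv_mul_cancel₀ hTne, Real.rpow_one]
  set L := Real.log (T / β) with hLdef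
  have hL : 0 < L := Real.log_pos ((one_lt_div hβ).2 hβT)
  have hlogα : Real.log α = -(L / T) := by
    rw [hα, Real.log_rpow hbT0, hLdef, Real.log_div hβ.ne' hTne, Real.log_div hTne hβ.ne']
    field_simp
    ring
  have h1 : 1 - α ≤ L / T := by
    have h := Real.log_le_sub_one_of_pos hα0
    rw [hlogα] at h
    linarith
  have hS : ∑ t ∈ Finset.Icc 1 T, α ^ t = α * (1 - β / T) / (1 - α) := by
    rw [← Finset.Ico_add_one_right_eq_Icc, Finset.sum_Ico_eq_sum_range]
    have : ∀ i, α ^ (1 + i) = α * α ^ i := fun i => by rw [pow_add, pow_one]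
    simp only [this, ← Finset.mul_sum, geom_sum_eq hα1.ne]
    rw [show T + 1 - 1 = T from rfl, hαT]
    have h1α : (1:ℝ) - α ≠ 0 := by linarith
    have h2α : α - 1 ≠ 0 := by intro h; apply h1α; linarith
    field_simp
    ring
  rw [hS]
  have hnum : 0 ≤ α * (1 - β / T) := by nlinarith
  have hLT : 0 < L / T := div_pos hL hT0
  have h1α : 0 < 1 - α := by linarith
  have step1 : α * (1 - β / T) / (L / T) ≤ α * (1 - β / T) / (1 - α) :=
    div_le_div_of_nonneg_left hnum h1α h1 |>.trans_eq rfl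
  have step2 : α * T / L - 2 * β / L ≤ α * (1 - β / T) / (L / T) := by
    rw [div_div_eq_mul_div, ← sub_div]
    gcongr
    have hx : β / T * T = β := div_mul_cancel₀ β hTne
    nlinarith [hα1.le, hβ.le, hT0.le]
  linarith
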